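/- arXiv:2510.23120 — 3 statements merged into one kernel-verified Lean document; each statement's English description precedes it below -/
import Mathlib

section
/- For a positive integer p, the set W(p) of matrices of the form (μ_{i,j}(c))_{0 ≤ i,j < p}, where c = (c_1, ..., c_{p-1}) ∈ ℂ^{p-1} with c_1 ≠ 0, is a subgroup of GL(p, ℂ): for any such parameters a, b with a_1, b_1 ≠ 0 there exists c with c_1 ≠ 0 such that μ(a)·μ(b) = μ(c), the identity matrix equals μ(e) with e = (1,0,...,0), and every μ(c) is invertible with inverse in W(p). -/
/-- The truncated generating polynomial `c₁ T + ⋯ + c_{p-1} T^{p-1}`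
(as a power series whose coefficients vanish in degrees `0` and `≥ p`). -/
noncomputable def Mtr (p : ℕ) (c : ℕ → ℂ) : PowerSeries ℂ :=
  PowerSeries.mk fun k => if k = 0 ∨ p ≤ k then 0 else c k

/-- The `p × p` matrix `μ(c) = (μ_{i,j}(c))_{0 ≤ i,j < p}`, where `μ_{i,j}(c)` is the
coefficient of `T^j` in `(c₁ T + ⋯ + c_{p-1} T^{p-1})^i`. -/
noncomputable def muMat (p : ℕ) (c : ℕ → ℂ) : Matrix (Fin p) (Fin p) ℂ :=
  fun i j => PowerSeries.coeff (R := ℂ) (j : ℕ) (Mtr p c ^ (i : ℕ))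

open Polynomial Finset

noncomputable def Qp (p : ℕ) (a : ℕ → ℂ) : Polynomial ℂ :=
  ∑ k ∈ Finset.range p, Polynomial.C (if k = 0 ∨ p ≤ k then 0 else a k) * Polynomial.X ^ k

lemma Qp_coeff (p : ℕ) (a : ℕ → ℂ) (j : ℕ) :
    (Qp p a).coeff j = if j = 0 ∨ p ≤ j then 0 else a j := by
  rw [Qp, Polynomial.finset_sum_coeff]
  by_cases hj : j < p
  · rw [Finset.sum_eq_single j]
    · simp
    · intro k _ hk; simp [Polynomial.coeff_X_pow, hk, Ne.symm hk]
    · intro h; exact absurd (Finset.mem_range.mpr hj) h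
  · push_neg at hj
    rw [Finset.sum_eq_zero, if_pos (Or.inr hj)]
    intro k hk
    have : k ≠ j := by have := Finset.mem_range.mp hk; omega
    simp [Polynomial.coeff_X_pow, this, Ne.symm this]

lemma Mtr_eq (p : ℕ) (a : ℕ → ℂ) : Mtr p a = (Qp p a : PowerSeries ℂ) := by
  ext n
  rw [Polynomial.coeff_coe, Qp_coeff, Mtr, PowerSeries.coeff_mk]

lemma muMat_eq (p : ℕ) (a : ℕ → ℂ) (i j : Fin p) :
    muMat p a i j = ((Qp p a) ^ (i : ℕ)).coeff j := by
  rw [muMat, Mtr_eq, ← Polynomial.coe_pow, Polynomial.coeff_coe]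

lemma pow_coeff_eq_zero {g : Polynomial ℂ} (hg : g.coeff 0 = 0) {j k : ℕ} (h : j < k) :
    (g ^ k).coeff j = 0 :=
  Polynomial.X_pow_dvd_iff.mp (pow_dvd_pow_of_dvd (Polynomial.X_dvd_iff.mpr hg) k) j h

lemma trunc_pow {p : ℕ} {f g : Polynomial ℂ} (h : ∀ d < p, f.coeff d = g.coeff d)
    (i : ℕ) {j : ℕ} (hj : j < p) : (f ^ i).coeff j = (g ^ i).coeff j := by
  have hd : (Polynomial.X : Polynomial ℂ) ^ p ∣ f - g :=
    Polynomial.X_pow_dvd_iff.mpr (fun d hd => by simp [h d hd])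
  have h2 : (Polynomial.X : Polynomial ℂ) ^ p ∣ f ^ i - g ^ i :=
    dvd_trans hd (sub_dvd_pow_sub_pow f g i)
  have := Polynomial.X_pow_dvd_iff.mp h2 j hj
  rw [Polynomial.coeff_sub, sub_eq_zero] at this
  exact this

lemma comp_coeff (f : Polynomial ℂ) {g : Polynomial ℂ} (hg : g.coeff 0 = 0) (j : ℕ) :
    (f.comp g).coeff j = ∑ k ∈ Finset.range (j + 1), f.coeff k * (g ^ k).coeff j := by
  rw [Polynomial.comp_eq_sum_left, Polynomial.sum_def, Polynomial.finset_sum_coeff]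
  simp only [Polynomial.coeff_C_mul]
  have h1 : ∑ x ∈ f.support, f.coeff x * (g ^ x).coeff j
      = ∑ x ∈ f.support ∪ Finset.range (j + 1), f.coeff x * (g ^ x).coeff j :=
    Finset.sum_subset Finset.subset_union_left
      (fun x _ hx => by rw [Polynomial.notMem_support_iff.mp hx, zero_mul])
  have h2 : ∑ x ∈ Finset.range (j + 1), f.coeff x * (g ^ x).coeff j
      = ∑ x ∈ f.support ∪ Finset.range (j + 1), f.coeff x * (g ^ x).coeff j :=
    Finset.sum_subset Finset.subset_union_right
      (fun x _ hx => by rw [pow_coeff_eq_zero hg (by simpa using hx), mul_zero])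
  rw [h1, h2]

lemma mmat_mul {p : ℕ} (f : Polynomial ℂ) {g : Polynomial ℂ} (hg : g.coeff 0 = 0)
    (i j : Fin p) :
    (∑ k : Fin p, (f ^ (i : ℕ)).coeff k * (g ^ (k : ℕ)).coeff j)
      = ((f.comp g) ^ (i : ℕ)).coeff j := by
  rw [← Polynomial.pow_comp, comp_coeff _ hg]
  rw [Fin.sum_univ_eq_sum_range (fun k => (f ^ (i : ℕ)).coeff k * (g ^ k).coeff j) p]
  symm
  apply Finset.sum_subset (Finset.range_subset_range.mpr j.isLt)
  intro x _ hx
  rw [pow_coeff_eq_zero hg (by simpa using hx), mul_zero]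

lemma Qp_coeff_zero (p : ℕ) (a : ℕ → ℂ) : (Qp p a).coeff 0 = 0 := by
  simp [Qp_coeff]

lemma Qp_agree (p q : ℕ) (hpq : p ≤ q) (a : ℕ → ℂ) :
    ∀ d < p, (Qp p a).coeff d = (Qp q a).coeff d := by
  intro d hd
  simp only [Qp_coeff]
  have h1 : ¬ p ≤ d := by omega
  have h2 : ¬ q ≤ d := by omega
  simp [h1, h2]

lemma muMat_eq' (p : ℕ) (a : ℕ → ℂ) (i j : Fin p) :
    muMat p a i j = ((Qp (p + 2) a) ^ (i : ℕ)).coeff j :=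
  (muMat_eq p a i j).trans (trunc_pow (Qp_agree p (p+2) (by omega) a) _ j.isLt)

lemma diag_coeff {g : Polynomial ℂ} (hg : g.coeff 0 = 0) (i : ℕ) :
    (g ^ i).coeff i = (g.coeff 1) ^ i := by
  obtain ⟨q, rfl⟩ := Polynomial.X_dvd_iff.mpr hg
  have h1 : (Polynomial.X * q).coeff 1 = q.coeff 0 := by
    simpa using Polynomial.coeff_X_mul q 0
  have h2 : ((Polynomial.X * q) ^ i).coeff i = (q ^ i).coeff 0 := by
    rw [mul_pow]
    simpa using Polynomial.coeff_X_pow_mul (q ^ i) i 0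
  rw [h1, h2, Polynomial.coeff_zero_eq_eval_zero, Polynomial.eval_pow,
    ← Polynomial.coeff_zero_eq_eval_zero]

/-- the set `W(p)` of matrices `μ(c)` with `c₁ ≠ 0` is a subgroup of
`GL(p, ℂ)`: it is closed under multiplication, contains the identity (`= μ(e)` with
`e = (1,0,…,0)`), and every `μ(c)` is invertible with inverse in `W(p)`. -/
theorem muMat_group (p : ℕ) (hp : 0 < p) :
    (∀ a b : ℕ → ℂ, a 1 ≠ 0 → b 1 ≠ 0 →
      ∃ c : ℕ → ℂ, c 1 ≠ 0 ∧ muMat p a * muMat p b = muMat p c) ∧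
    (muMat p (fun k => if k = 1 then 1 else 0) = 1) ∧
    (∀ a : ℕ → ℂ, a 1 ≠ 0 →
      ∃ c : ℕ → ℂ, c 1 ≠ 0 ∧ muMat p a * muMat p c = 1 ∧ muMat p c * muMat p a = 1) := by
  refine ⟨?_, ?_, ?_⟩
  · -- multiplication
    intro a b ha hb
    have hgB : (Qp (p+2) b).coeff 0 = 0 := Qp_coeff_zero _ _
    refine ⟨fun k => ((Qp (p+2) a).comp (Qp (p+2) b)).coeff k, ?_, ?_⟩
    · have hc1 : ((Qp (p+2) a).comp (Qp (p+2) b)).coeff 1 = a 1 * b 1 := by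
        rw [comp_coeff _ hgB 1, Finset.sum_range_succ, Finset.sum_range_one]
        simp [Qp_coeff]
      show ((Qp (p+2) a).comp (Qp (p+2) b)).coeff 1 ≠ 0
      rw [hc1]
      exact mul_ne_zero ha hb
    · ext i j
      rw [Matrix.mul_apply,
        Finset.sum_congr rfl (fun k _ => by rw [muMat_eq', muMat_eq']),
        mmat_mul _ hgB i j, muMat_eq]
      refine (trunc_pow ?_ _ j.isLt).symm
      intro d hd
      rw [Qp_coeff]
      by_cases hd0 : d = 0
      · subst hd0
        rw [if_pos (Or.inl rfl), comp_coeff _ hgB 0, Finset.sum_range_one]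
        simp [Qp_coeff_zero]
      · rw [if_neg (by push_neg; exact ⟨hd0, by omega⟩)]
  · -- identity
    ext i j
    rw [muMat_eq]
    have hx : ∀ d < p, (Qp p (fun k => if k = 1 then (1:ℂ) else 0)).coeff d
        = (Polynomial.X : Polynomial ℂ).coeff d := by
      intro d hd
      have hpd : ¬ p ≤ d := by omega
      simp only [Qp_coeff, Polynomial.coeff_X, hpd, or_false]
      by_cases h0 : d = 0
      · subst h0; simp
      · by_cases h1 : d = 1
        · subst h1; simp
        · simp [h0, h1, Ne.symm h1]
    rw [trunc_pow hx _ j.isLt, Polynomial.coeff_X_pow, Matrix.one_apply]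
    by_cases hij : i = j
    · subst hij; simp
    · rw [if_neg hij, if_neg (fun h => hij (Fin.ext h).symm)]
  · -- inverse
    intro a ha
    by_cases hp2 : 2 ≤ p
    swap
    · have hp1 : p = 1 := by omega
      subst hp1
      have hone : ∀ x : ℕ → ℂ, muMat 1 x = 1 := by
        intro x
        ext i j
        have hi : i = 0 := Subsingleton.elim _ _
        have hj : j = 0 := Subsingleton.elim _ _
        subst hi; subst hj
        simp [muMat]
      exact ⟨a, ha, by simp [hone], by simp [hone]⟩
    · have hga : (Qp p a).coeff 0 = 0 := Qp_coeff_zero p a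
      have htri : (muMat p a).BlockTriangular id := by
        intro i j hij
        rw [muMat_eq]
        exact pow_coeff_eq_zero hga hij
      have hdiag : ∀ i : Fin p, muMat p a i i = (a 1) ^ (i : ℕ) := by
        intro i
        rw [muMat_eq, diag_coeff hga]
        congr 1
        rw [Qp_coeff, if_neg (by push_neg; exact ⟨one_ne_zero, by omega⟩)]
      have hdet : IsUnit (muMat p a).det := by
        rw [Matrix.det_of_upperTriangular htri]
        refine isUnit_iff_ne_zero.mpr (Finset.prod_ne_zero_iff.mpr fun i _ => ?_)
        rw [hdiag]
        exact pow_ne_zero _ ha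
      set N := (muMat p a)⁻¹ with hN
      have h1 : muMat p a * N = 1 := Matrix.mul_nonsing_inv _ hdet
      have h2 : N * muMat p a = 1 := Matrix.nonsing_inv_mul _ hdet
      have hInv : Invertible (muMat p a) := (muMat p a).invertibleOfIsUnitDet hdet
      have hNtri : N.BlockTriangular id := Matrix.blockTriangular_inv_of_blockTriangular htri
      set one : Fin p := ⟨1, by omega⟩ with honedef
      set c : ℕ → ℂ := fun k => if hk : k < p then N one ⟨k, hk⟩ else 0 with hc
      have hrow : ∀ j : Fin p, muMat p c one j = N one j := by
        intro j
        rw [muMat_eq]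
        rw [show ((one : Fin p) : ℕ) = 1 from rfl, pow_one, Qp_coeff]
        by_cases hj0 : (j : ℕ) = 0
        · rw [if_pos (Or.inl hj0)]
          have hjz : j = (⟨0, by omega⟩ : Fin p) := Fin.ext hj0
          rw [hjz]
          exact (hNtri (show id (⟨0, by omega⟩ : Fin p) < id one from by
            simp [honedef, Fin.lt_def])).symm
        · rw [if_neg (by push_neg; exact ⟨hj0, by omega⟩), hc]
          dsimp only
          rw [dif_pos j.isLt]
      have hkey : muMat p c * muMat p a = 1 := by
        ext i j
        rw [Matrix.mul_apply,
          Finset.sum_congr rfl (fun k _ => by rw [muMat_eq, muMat_eq]),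
          mmat_mul _ hga i j]
        have hagree : ∀ d < p, ((Qp p c).comp (Qp p a)).coeff d
            = (Polynomial.X : Polynomial ℂ).coeff d := by
          intro d hd
          calc ((Qp p c).comp (Qp p a)).coeff d
              = ∑ k : Fin p, ((Qp p c) ^ ((one : Fin p) : ℕ)).coeff k
                  * ((Qp p a) ^ (k : ℕ)).coeff ((⟨d, hd⟩ : Fin p) : ℕ) := by
                rw [mmat_mul _ hga one ⟨d, hd⟩,
                  show ((one : Fin p) : ℕ) = 1 from rfl, pow_one]
            _ = ∑ k : Fin p, N one k * muMat p a k ⟨d, hd⟩ := by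
                refine Finset.sum_congr rfl fun k _ => ?_
                rw [← muMat_eq, ← muMat_eq, hrow k]
            _ = (N * muMat p a) one ⟨d, hd⟩ := (Matrix.mul_apply).symm
            _ = (1 : Matrix (Fin p) (Fin p) ℂ) one ⟨d, hd⟩ := by rw [h2]
            _ = (Polynomial.X : Polynomial ℂ).coeff d := by
                rw [Matrix.one_apply, Polynomial.coeff_X]
                by_cases hd1 : d = 1
                · subst hd1; simp [honedef]
                · rw [if_neg (fun h => hd1 (by simpa [honedef, Fin.ext_iff] using h.symm)),
                    if_neg (by omega)]
        rw [trunc_pow hagree _ j.isLt, Polynomial.coeff_X_pow, Matrix.one_apply]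
        by_cases hij : i = j
        · subst hij; simp
        · rw [if_neg hij, if_neg (fun h => hij (Fin.ext h).symm)]
      have hkey2 : muMat p a * muMat p c = 1 := mul_eq_one_comm.mp hkey
      have hc1 : c 1 = N one one := by
        rw [hc]; dsimp only; rw [dif_pos (by omega : 1 < p)]
      have hNone : a 1 * N one one = 1 := by
        have he := congrFun (congrFun h1 one) one
        rw [Matrix.mul_apply, Matrix.one_apply_eq] at he
        rw [Finset.sum_eq_single one] at he
        · rw [hdiag one, show ((one : Fin p) : ℕ) = 1 from rfl, pow_one] at he
          exact he
        · intro k _ hk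
          rcases lt_or_gt_of_ne hk with hlt | hgt
          · rw [htri (show id k < id one from hlt), zero_mul]
          · rw [hNtri (show id one < id k from hgt), mul_zero]
        · intro h; exact absurd (Finset.mem_univ one) h
      refine ⟨c, ?_, hkey2, hkey⟩
      rw [hc1]
      intro h0
      rw [h0, mul_zero] at hNone
      exact one_ne_zero hNone.symm
end

section
/- Let Y ∈ GL(n,ℂ) normalize the group J_1(n) of invertible upper-triangular Toeplitz matrices, and suppose the 0-th row of Y is (1, 0, ..., 0). Then there exists c = (c_1,...,c_{n-1}) ∈ ℂ^{n-1} with c_1 ≠ 0 such that Y = (μ_{i,j}(c))_{0≤i,j<n}. -/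
open PowerSeries

lemma sum_aux (n i j : ℕ) (hij : i ≤ j) (hj : j < n) (f g : PowerSeries ℂ) :
    ∑ k ∈ Finset.range n,
      (if i ≤ k then PowerSeries.coeff (k - i) f else 0) *
        (if k ≤ j then PowerSeries.coeff (j - k) g else 0)
      = PowerSeries.coeff (j - i) (f * g) := by
  rw [PowerSeries.coeff_mul, Finset.Nat.sum_antidiagonal_eq_sum_range_succ_mk]
  have hsub : (Finset.range (j - i + 1)).image (fun d => i + d) ⊆ Finset.range n := by
    intro x hx
    rw [Finset.mem_image] at hx
    obtain ⟨d, hd, rfl⟩ := hx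
    rw [Finset.mem_range] at hd ⊢
    omega
  have hinj : Set.InjOn (fun d => i + d) ((Finset.range (j - i + 1)) : Set ℕ) := by
    intro a _ b _ h
    simpa using h
  have hzero : ∀ x ∈ Finset.range n,
      x ∉ (Finset.range (j - i + 1)).image (fun d => i + d) →
      (if i ≤ x then PowerSeries.coeff (x - i) f else 0) *
        (if x ≤ j then PowerSeries.coeff (j - x) g else 0) = 0 := by
    intro x _ hx
    rw [Finset.mem_image] at hx
    push_neg at hx
    by_cases h1 : i ≤ x
    · have h2 : ¬ x ≤ j := by
        intro h2
        have h3 := hx (x - i) (by rw [Finset.mem_range]; omega)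
        exact h3 (show i + (x - i) = x by omega)
      simp [h2]
    · simp [h1]
  rw [← Finset.sum_subset hsub hzero, Finset.sum_image hinj]
  refine Finset.sum_congr rfl fun d hd => ?_
  rw [Finset.mem_range] at hd
  have h1 : i ≤ i + d := Nat.le_add_right _ _
  have h2 : i + d ≤ j := by omega
  rw [if_pos h1, if_pos h2, show i + d - i = d by omega, show j - (i + d) = j - i - d by omega]

/-- The truncated "power series to upper-triangular Toeplitz matrix" map. -/
noncomputable def phiFun (n : ℕ) (f : PowerSeries ℂ) : Matrix (Fin n) (Fin n) ℂ :=
  Matrix.of fun i j => if (i : ℕ) ≤ (j : ℕ) then PowerSeries.coeff ((j : ℕ) - (i : ℕ)) f else 0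

lemma phiFun_apply (n : ℕ) (f : PowerSeries ℂ) (i j : Fin n) :
    phiFun n f i j = if (i : ℕ) ≤ (j : ℕ) then PowerSeries.coeff ((j : ℕ) - (i : ℕ)) f else 0 :=
  rfl

lemma phiFun_one (n : ℕ) : phiFun n 1 = 1 := by
  ext i j
  rw [phiFun_apply, Matrix.one_apply, PowerSeries.coeff_one]
  by_cases h : i = j
  · subst h; simp
  · have : ¬ ((i:ℕ) ≤ j ∧ (j:ℕ) - i = 0) := by
      intro ⟨h1, h2⟩; exact h (Fin.ext (by omega))
    split_ifs with h1 h2 <;> simp_all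

lemma phiFun_mul (n : ℕ) (f g : PowerSeries ℂ) :
    phiFun n (f * g) = phiFun n f * phiFun n g := by
  ext i j
  rw [Matrix.mul_apply, phiFun_apply]
  simp only [phiFun_apply]
  by_cases hij : (i:ℕ) ≤ (j:ℕ)
  · rw [if_pos hij, ← sum_aux n i j hij j.isLt f g,
      Fin.sum_univ_eq_sum_range (fun k =>
        (if (i:ℕ) ≤ k then PowerSeries.coeff (k - (i:ℕ)) f else 0) *
          (if k ≤ (j:ℕ) then PowerSeries.coeff ((j:ℕ) - k) g else 0))]
  · rw [if_neg hij]
    symm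
    refine Finset.sum_eq_zero fun k _ => ?_
    by_cases h1 : (i:ℕ) ≤ (k:ℕ)
    · have h2 : ¬ (k:ℕ) ≤ (j:ℕ) := by omega
      simp [h2]
    · simp [h1]

lemma phiFun_pow (n : ℕ) (f : PowerSeries ℂ) (k : ℕ) :
    phiFun n (f ^ k) = (phiFun n f) ^ k := by
  induction k with
  | zero => simpa using phiFun_one n
  | succ m ih => rw [pow_succ, pow_succ, phiFun_mul, ih]

noncomputable def phiL (n : ℕ) : PowerSeries ℂ →ₗ[ℂ] Matrix (Fin n) (Fin n) ℂ where
  toFun := phiFun n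
  map_add' f g := by
    ext i j
    simp only [phiFun_apply, Matrix.add_apply, map_add]
    split_ifs <;> simp
  map_smul' c f := by
    ext i j
    simp only [phiFun_apply, Matrix.smul_apply, map_smul, RingHom.id_apply, smul_eq_mul]
    split_ifs <;> simp

lemma coeff_pow_congr {f g : PowerSeries ℂ} {n : ℕ}
    (h : ∀ k < n, PowerSeries.coeff k f = PowerSeries.coeff k g) :
    ∀ i : ℕ, ∀ j < n, PowerSeries.coeff j (f ^ i) = PowerSeries.coeff j (g ^ i) := by
  intro i
  induction i with
  | zero => intro j _; rfl
  | succ m ih =>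
    intro j hj
    rw [pow_succ, pow_succ, PowerSeries.coeff_mul, PowerSeries.coeff_mul]
    refine Finset.sum_congr rfl fun p hp => ?_
    rw [Finset.HasAntidiagonal.mem_antidiagonal] at hp
    rw [ih p.1 (by omega), h p.2 (by omega)]


/-- `J_1(n) ⊂ GL(n,ℂ)`: invertible upper-triangular Toeplitz matrices
`Σ_{0≤k<n} a_k Λ^k` with `a₀ ≠ 0`. -/
def J1set (n : ℕ) : Set (Matrix (Fin n) (Fin n) ℂ) :=
  {M | ∃ a : ℕ → ℂ, a 0 ≠ 0 ∧
    ∀ i j : Fin n, M i j = if (i : ℕ) ≤ (j : ℕ) then a ((j : ℕ) - (i : ℕ)) else 0}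

/-- if `Y ∈ GL(n,ℂ)` normalizes `J_1(n)` and the `0`-th row of `Y` is
`(1,0,…,0)`, then there is `c = (c₁,…,c_{n-1})` with `c₁ ≠ 0` such that
`Y = (μ_{i,j}(c))_{0≤i,j<n}`, where `μ_{i,j}(c)` is the coefficient of `T^j` in
`(c₁T + ⋯ + c_{n-1}T^{n-1})^i`. -/
theorem normalizer_toeplitz_mu (n : ℕ) (hn : 0 < n) (Y : (Matrix (Fin n) (Fin n) ℂ)ˣ)
    (hY : ∀ A ∈ J1set n,
      ((Y : Matrix (Fin n) (Fin n) ℂ) * A * ((Y⁻¹ : _ˣ) : Matrix (Fin n) (Fin n) ℂ)) ∈ J1set n)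
    (hrow : ∀ j : Fin n,
      (Y : Matrix (Fin n) (Fin n) ℂ) ⟨0, hn⟩ j = if j = ⟨0, hn⟩ then 1 else 0) :
    ∃ c : ℕ → ℂ, c 1 ≠ 0 ∧ ∀ i j : Fin n,
      (Y : Matrix (Fin n) (Fin n) ℂ) i j =
        PowerSeries.coeff (j : ℕ)
          ((PowerSeries.mk fun k => if k = 0 ∨ n ≤ k then 0 else c k : PowerSeries ℂ) ^
            (i : ℕ)) := by
  classical
  set Ym : Matrix (Fin n) (Fin n) ℂ := (Y : Matrix (Fin n) (Fin n) ℂ) with hYmdef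
  set Yi : Matrix (Fin n) (Fin n) ℂ := ((Y⁻¹ : _ˣ) : Matrix (Fin n) (Fin n) ℂ) with hYidef
  have hYYi : Ym * Yi = 1 := Y.mul_inv
  have hYiY : Yi * Ym = 1 := Y.inv_mul
  -- J1set is contained in the range of phiL
  have hJ1T : ∀ M ∈ J1set n, M ∈ LinearMap.range (phiL n) := by
    rintro M ⟨a, _, hM⟩
    refine ⟨PowerSeries.mk a, ?_⟩
    ext i j
    rw [hM i j]
    simp [phiL, phiFun_apply, PowerSeries.coeff_mk]
  have hphiJ1 : ∀ f : PowerSeries ℂ, PowerSeries.coeff 0 f ≠ 0 → phiFun n f ∈ J1set n :=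
    fun f hf => ⟨fun k => PowerSeries.coeff k f, hf, fun i j => rfl⟩
  -- conjugation as a linear equivalence
  let e : Matrix (Fin n) (Fin n) ℂ ≃ₗ[ℂ] Matrix (Fin n) (Fin n) ℂ :=
    { toFun := fun M => Ym * M * Yi
      invFun := fun M => Yi * M * Ym
      map_add' := fun A B => by
        show Ym * (A + B) * Yi = Ym * A * Yi + Ym * B * Yi
        rw [mul_add, add_mul]
      map_smul' := fun c A => by
        show Ym * (c • A) * Yi = c • (Ym * A * Yi)
        rw [Matrix.mul_smul, Matrix.smul_mul]
      left_inv := fun A => by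
        simp only [← mul_assoc]
        rw [hYiY, one_mul, mul_assoc, hYiY, mul_one]
      right_inv := fun A => by
        simp only [← mul_assoc]
        rw [hYYi, one_mul, mul_assoc, hYYi, mul_one] }
  have he : ∀ M, e M = Ym * M * Yi := fun _ => rfl
  have hes : ∀ M, e.symm M = Yi * M * Ym := fun _ => rfl
  have hconj : ∀ M ∈ LinearMap.range (phiL n), e M ∈ LinearMap.range (phiL n) := by
    rintro M ⟨f, rfl⟩
    by_cases h0 : PowerSeries.coeff 0 f = 0
    · have hmem : phiFun n (f + 1) ∈ J1set n := by
        refine hphiJ1 _ ?_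
        rw [map_add, h0, PowerSeries.coeff_zero_one]
        simp
      have h2 : e (phiFun n (f + 1)) ∈ LinearMap.range (phiL n) := hJ1T _ (hY _ hmem)
      have h3 : e (phiL n f) = e (phiFun n (f + 1)) - 1 := by
        have h4 : phiFun n (f + 1) = phiL n f + phiL n 1 := (map_add (phiL n) f 1)
        rw [h4, map_add]
        have h5 : e (phiL n 1) = 1 := by
          show Ym * phiFun n 1 * Yi = 1
          rw [phiFun_one, mul_one, hYYi]
        rw [h5, add_sub_cancel_right]
      rw [h3]
      exact Submodule.sub_mem _ h2 ⟨1, phiFun_one n⟩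
    · exact hJ1T _ (hY _ (hphiJ1 f h0))
  have hmap : (LinearMap.range (phiL n)).map (e : _ →ₗ[ℂ] _) ≤ LinearMap.range (phiL n) := by
    rintro M ⟨A, hA, rfl⟩
    exact hconj A hA
  have heq : (LinearMap.range (phiL n)).map (e : _ →ₗ[ℂ] _) = LinearMap.range (phiL n) :=
    Submodule.eq_of_le_of_finrank_le hmap
      (le_of_eq (LinearEquiv.finrank_map_eq e _).symm)
  have hXmem : phiL n PowerSeries.X ∈
      (LinearMap.range (phiL n)).map (e : _ →ₗ[ℂ] _) := by
    rw [heq]; exact ⟨PowerSeries.X, rfl⟩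
  obtain ⟨Mm, hMmmem, hMm⟩ := hXmem
  obtain ⟨f0, rfl⟩ := hMmmem
  -- main identity : Ym * phiFun n f0 * Yi = phiFun n X
  have hYM : Ym * phiFun n f0 * Yi = phiFun n PowerSeries.X := hMm
  have hM2 : phiFun n f0 = Yi * phiFun n PowerSeries.X * Ym := by
    rw [← hYM]
    simp only [← mul_assoc]
    rw [hYiY, one_mul, mul_assoc, hYiY, mul_one]
  -- nilpotency facts
  have hXn : (phiFun n PowerSeries.X) ^ n = 0 := by
    rw [← phiFun_pow]
    ext i j
    rw [phiFun_apply, Matrix.zero_apply]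
    have hj := j.isLt
    split_ifs with hij
    · rw [PowerSeries.coeff_X_pow, if_neg (by omega)]
    · rfl
  have hNn : (phiFun n f0) ^ n = 0 := by
    rw [hM2, hYidef, Units.conj_pow', ← hYidef, hXn, mul_zero, zero_mul]
  have hc0 : PowerSeries.coeff 0 f0 = 0 := by
    have h := congrFun (congrFun ((phiFun_pow n f0 n).trans hNn) ⟨0, hn⟩) ⟨0, hn⟩
    rw [phiFun_apply, Matrix.zero_apply] at h
    simp only [le_refl, if_pos, Nat.sub_self] at h
    rw [PowerSeries.coeff_zero_eq_constantCoeff, map_pow] at h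
    have := pow_eq_zero_iff (show n ≠ 0 by omega) |>.mp h
    rw [PowerSeries.coeff_zero_eq_constantCoeff]
    exact this
  -- coefficients of powers of X matrix
  have hAY : phiFun n PowerSeries.X * Ym = Ym * phiFun n f0 := by
    rw [← hYM, mul_assoc, hYiY, mul_one]
  have hpow : ∀ k : ℕ, (phiFun n PowerSeries.X) ^ k * Ym = Ym * (phiFun n f0) ^ k := by
    intro k
    induction k with
    | zero => rw [pow_zero, pow_zero, one_mul, mul_one]
    | succ m ih =>
      rw [pow_succ, mul_assoc, hAY, ← mul_assoc, ih, mul_assoc, ← pow_succ]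
  -- c1 is nonzero when n ≥ 2
  have hc1 : 2 ≤ n → PowerSeries.coeff 1 f0 ≠ 0 := by
    intro h2 h1
    have hdvd : (PowerSeries.X : PowerSeries ℂ) ^ 2 ∣ f0 := by
      rw [PowerSeries.X_pow_dvd_iff]
      intro m hm
      interval_cases m
      · exact hc0
      · exact h1
    have hdvd2 : (PowerSeries.X : PowerSeries ℂ) ^ (2 * (n - 1)) ∣ f0 ^ (n - 1) := by
      rw [pow_mul]
      exact pow_dvd_pow_of_dvd hdvd (n - 1)
    have hzero := PowerSeries.X_pow_dvd_iff.mp hdvd2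
    have hphine : phiFun n (f0 ^ (n - 1)) = 0 := by
      ext i j
      rw [phiFun_apply, Matrix.zero_apply]
      have hj := j.isLt
      split_ifs with hij
      · exact hzero _ (by omega)
      · rfl
    have hXn1 : phiFun n (PowerSeries.X ^ (n - 1)) = 0 := by
      rw [phiFun_pow, ← hYM, hYidef, Units.conj_pow, ← hYidef, ← phiFun_pow, hphine,
        mul_zero, zero_mul]
    have hcontra := congrFun (congrFun hXn1 ⟨0, hn⟩) ⟨n - 1, by omega⟩
    rw [phiFun_apply, Matrix.zero_apply] at hcontra
    simp only [Nat.zero_le, if_pos, Nat.sub_zero] at hcontra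
    rw [PowerSeries.coeff_X_pow, if_pos rfl] at hcontra
    exact one_ne_zero hcontra
  -- the entry formula
  have hentry : ∀ i j : Fin n, Ym i j = PowerSeries.coeff (j : ℕ) (f0 ^ (i : ℕ)) := by
    intro i j
    have hL : ((phiFun n PowerSeries.X) ^ (i : ℕ) * Ym) ⟨0, hn⟩ j = Ym i j := by
      rw [← phiFun_pow, Matrix.mul_apply]
      refine (Finset.sum_eq_single i ?_ ?_).trans ?_
      · intro k _ hk
        rw [phiFun_apply]
        rw [if_pos (Nat.zero_le _), PowerSeries.coeff_X_pow]
        have hki : ¬ ((k : ℕ) - ((⟨0, hn⟩ : Fin n) : ℕ) = (i : ℕ)) := by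
          simp only [Nat.sub_zero]
          exact fun h => hk (Fin.ext h)
        rw [if_neg hki, zero_mul]
      · intro h; exact absurd (Finset.mem_univ i) h
      · rw [phiFun_apply, if_pos (Nat.zero_le _), PowerSeries.coeff_X_pow]
        simp
    have hR : (Ym * (phiFun n f0) ^ (i : ℕ)) ⟨0, hn⟩ j
        = ((phiFun n f0) ^ (i : ℕ)) ⟨0, hn⟩ j := by
      rw [Matrix.mul_apply]
      refine (Finset.sum_eq_single ⟨0, hn⟩ ?_ ?_).trans ?_
      · intro k _ hk
        rw [hrow k, if_neg hk, zero_mul]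
      · intro h; exact absurd (Finset.mem_univ _) h
      · rw [hrow, if_pos rfl, one_mul]
    rw [← hL, hpow, hR, ← phiFun_pow, phiFun_apply, if_pos (Nat.zero_le _)]
    simp
  -- assemble
  refine ⟨fun k => if k = 0 ∨ n ≤ k then (if k = 1 then 1 else 0)
    else PowerSeries.coeff k f0, ?_, ?_⟩
  · by_cases hn1 : n ≤ 1
    · simp [hn1]
    · have h : ¬ ((1 : ℕ) = 0 ∨ n ≤ 1) := by omega
      show (if (1:ℕ) = 0 ∨ n ≤ 1 then (if (1:ℕ) = 1 then (1:ℂ) else 0)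
        else PowerSeries.coeff 1 f0) ≠ 0
      rw [if_neg h]
      exact hc1 (by omega)
  · intro i j
    have hg : ∀ k < n, PowerSeries.coeff k
        (PowerSeries.mk fun k => if k = 0 ∨ n ≤ k then 0
          else if k = 0 ∨ n ≤ k then (if k = 1 then 1 else 0)
            else PowerSeries.coeff k f0 : PowerSeries ℂ)
        = PowerSeries.coeff k f0 := by
      intro k hk
      rw [PowerSeries.coeff_mk]
      by_cases hk0 : k = 0
      · subst hk0
        simp [hc0]
      · simp only [if_neg (show ¬ (k = 0 ∨ n ≤ k) by omega)]
    rw [hentry i j]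
    exact (coeff_pow_congr hg (i : ℕ) (j : ℕ) j.isLt).symm
end

section
/- For the group W(n) = {μ(c) = (μ_{i,j}(c))_{0≤i,j<n} : c ∈ ℂ^{n-1}, c_1 ≠ 0} ⊂ GL(n,ℂ) and any α = (α_0, α_1, ..., α_{n-1}) ∈ ℂ^n with α_{n-1} ≠ 0, there exists g ∈ W(n) such that α · g^T = (α_0, 0, ..., 0, 1). In particular, the W(n)-orbit of α under right multiplication by transposes contains (α_0, 0, ..., 0, 1), and the entry α_0 is invariant under this action. -/
/-- The generating series `M(c,T) = c₁ T + c₂ T² + ⋯`. -/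
noncomputable def Mgen (c : ℕ → ℂ) : PowerSeries ℂ :=
  PowerSeries.mk fun k => if k = 0 then 0 else c k

/-- `μ_{i,j}(c)` is the coefficient of `T^j` in `M(c,T)^i`. -/
noncomputable def mu (c : ℕ → ℂ) (i j : ℕ) : ℂ :=
  PowerSeries.coeff (R := ℂ) j (Mgen c ^ i)

lemma coeff_Mgen (c : ℕ → ℂ) (k : ℕ) :
    PowerSeries.coeff k (Mgen c) = if k = 0 then 0 else c k :=
  PowerSeries.coeff_mk _ _

lemma mu_zero (c : ℕ → ℂ) (j : ℕ) : mu c 0 j = if j = 0 then 1 else 0 := by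
  simp [mu, PowerSeries.coeff_one]

lemma mu_succ (c : ℕ → ℂ) (i j : ℕ) :
    mu c (i+1) j = ∑ p ∈ Finset.HasAntidiagonal.antidiagonal j, mu c i p.1 *
      (if p.2 = 0 then 0 else c p.2) := by
  simp only [mu, pow_succ, PowerSeries.coeff_mul, coeff_Mgen]

lemma mu_vanish (c : ℕ → ℂ) : ∀ i j, j < i → mu c i j = 0 := by
  intro i
  induction i with
  | zero => intro j h; omega
  | succ i ih =>
    intro j h
    rw [mu_succ]
    apply Finset.sum_eq_zero
    rintro ⟨a, b⟩ hp
    rw [Finset.HasAntidiagonal.mem_antidiagonal] at hp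
    simp only
    rcases Nat.eq_zero_or_pos b with hb | hb
    · simp [hb]
    · rw [ih a (by omega), zero_mul]

lemma mu_diag (c : ℕ → ℂ) : ∀ i, mu c i i = (c 1) ^ i := by
  intro i
  induction i with
  | zero => simp [mu_zero]
  | succ i ih =>
    rw [mu_succ]
    rw [Finset.sum_eq_single_of_mem (i, 1) (by simp)]
    · simpa [ih] using (pow_succ (c 1) i).symm
    · rintro ⟨a, b⟩ hp hne
      rw [Finset.HasAntidiagonal.mem_antidiagonal] at hp
      simp only
      rcases Nat.eq_zero_or_pos b with hb | hb
      · simp [hb]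
      · have : a < i := by
          rcases Nat.lt_or_ge a i with h | h
          · exact h
          · exfalso; apply hne; have : a = i := by omega
            simp [this, show b = 1 by omega]
        rw [mu_vanish c i a this, zero_mul]

lemma mu_congr (c c' : ℕ → ℂ) : ∀ i j, (∀ k, 0 < k → k + i ≤ j + 1 → c k = c' k) →
    mu c i j = mu c' i j := by
  intro i
  induction i with
  | zero => intro j _; rw [mu_zero, mu_zero]
  | succ i ih =>
    intro j h
    rw [mu_succ, mu_succ]
    apply Finset.sum_congr rfl
    rintro ⟨a, b⟩ hp
    rw [Finset.HasAntidiagonal.mem_antidiagonal] at hp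
    simp only
    rcases Nat.eq_zero_or_pos b with hb | hb
    · simp [hb]
    · rcases Nat.lt_or_ge a i with ha | ha
      · rw [mu_vanish c i a ha, mu_vanish c' i a ha, zero_mul, zero_mul]
      · rw [if_neg (by omega), if_neg (by omega),
          ih a (fun k hk hk2 => h k hk (by omega)), h b hb (by omega)]

open PowerSeries in
lemma coeff_mul_mono (φ : PowerSeries ℂ) (t j : ℕ) (y : ℂ) :
    PowerSeries.coeff j (φ * PowerSeries.monomial t y) =
      if t ≤ j then PowerSeries.coeff (j - t) φ * y else 0 := by
  rw [PowerSeries.coeff_mul]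
  rcases le_or_gt t j with h | h
  · rw [if_pos h, Finset.sum_eq_single_of_mem (j - t, t)
      (by rw [Finset.HasAntidiagonal.mem_antidiagonal]; omega)]
    · rw [PowerSeries.coeff_monomial_same]
    · rintro ⟨a, b⟩ hp hne
      rw [Finset.HasAntidiagonal.mem_antidiagonal] at hp
      rw [PowerSeries.coeff_monomial, if_neg (by rintro rfl; exact hne (by simp; omega)),
        mul_zero]
  · rw [if_neg (by omega)]
    apply Finset.sum_eq_zero
    rintro ⟨a, b⟩ hp
    rw [Finset.HasAntidiagonal.mem_antidiagonal] at hp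
    rw [PowerSeries.coeff_monomial, if_neg (by omega), mul_zero]

lemma mono_pow (t : ℕ) (y : ℂ) (s : ℕ) :
    (PowerSeries.monomial t y) ^ s = PowerSeries.monomial (s * t) (y ^ s) := by
  induction s with
  | zero => simp [PowerSeries.monomial_zero_eq_C_apply]
  | succ s ih =>
    ext j
    rw [pow_succ, ih, coeff_mul_mono, PowerSeries.coeff_monomial, PowerSeries.coeff_monomial]
    have hst : (s + 1) * t = s * t + t := Nat.succ_mul s t
    rcases le_or_gt t j with h | h
    · rw [if_pos h]
      by_cases hj : j = (s + 1) * t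
      · rw [if_pos (by omega), if_pos hj, pow_succ]
      · rw [if_neg (by omega), if_neg hj, zero_mul]
    · rw [if_neg (by omega), if_neg (by omega)]

lemma mu_top (c : ℕ → ℂ) (m i : ℕ) (hm : 2 ≤ m) (hi : 1 ≤ i) :
    mu c i (i + m - 1) =
      mu (fun k => if k = m then 0 else c k) i (i + m - 1) +
        i * (c 1) ^ (i - 1) * c m := by
  set j := i + m - 1 with hj
  set c' : ℕ → ℂ := fun k => if k = m then 0 else c k with hc'
  have hM : Mgen c = Mgen c' + PowerSeries.monomial m (c m) := by
    ext k
    rw [map_add, coeff_Mgen, coeff_Mgen, PowerSeries.coeff_monomial]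
    by_cases hk : k = m
    · rw [hk]; simp [hc', show m ≠ 0 by omega]
    · simp [hc', hk]
  have key : ∀ s ∈ Finset.range (i + 1),
      PowerSeries.coeff j ((Mgen c') ^ s * (PowerSeries.monomial m (c m)) ^ (i - s)
          * (i.choose s : PowerSeries ℂ)) =
        (if s = i then mu c' i j else 0) +
        (if s = i - 1 then (i : ℂ) * (c 1) ^ (i - 1) * c m else 0) := by
    intro s hs
    rw [Finset.mem_range] at hs
    rw [mono_pow, ← map_natCast (PowerSeries.C (R := ℂ)) (i.choose s), PowerSeries.coeff_mul_C,
      coeff_mul_mono]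
    by_cases hsi : s = i
    · rw [hsi]
      simp only [Nat.sub_self, Nat.zero_mul, pow_zero, Nat.choose_self]
      rw [if_true, if_neg (by omega : ¬ i = i - 1), add_zero]
      simp [mu]
    by_cases hsi1 : s = i - 1
    · rw [hsi1]
      have h1 : i - (i - 1) = 1 := by omega
      rw [h1, one_mul, pow_one]
      rw [if_pos (by omega : m ≤ j), if_neg (by omega : ¬ i - 1 = i), if_pos rfl]
      have h2 : j - m = i - 1 := by omega
      rw [h2, show PowerSeries.coeff (i-1) (Mgen c' ^ (i-1)) = mu c' (i-1) (i-1) from rfl,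
        mu_diag]
      have hc1 : c' 1 = c 1 := by simp only [hc']; rw [if_neg (by omega : ¬ (1:ℕ) = m)]
      have hch : i.choose (i - 1) = i := by
        obtain ⟨i', rfl⟩ : ∃ i', i = i' + 1 := ⟨i - 1, by omega⟩
        simp [Nat.choose_succ_self_right]
      rw [hc1, hch, zero_add]
      ring
    · rw [if_neg hsi, if_neg hsi1, add_zero]
      set d := i - s with hd
      have hd2 : 2 ≤ d := by omega
      rcases le_or_gt (d * m) j with h | h
      · rw [if_pos h]
        have hlt : j - d * m < s := by
          obtain ⟨m', rfl⟩ : ∃ m', m = m' + 1 := ⟨m - 1, by omega⟩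
          have h1 : d * (m' + 1) = d * m' + d := Nat.mul_succ d m'
          have h2 : 2 * m' ≤ d * m' := Nat.mul_le_mul_right m' hd2
          omega
        rw [show PowerSeries.coeff (j - d*m) (Mgen c' ^ s) = mu c' s (j - d*m) from rfl,
          mu_vanish c' s _ hlt, zero_mul, zero_mul]
      · rw [if_neg (by omega), zero_mul]
  have hpow := add_pow (Mgen c') (PowerSeries.monomial m (c m)) i
  rw [mu, hM, hpow, map_sum, Finset.sum_congr rfl key, Finset.sum_add_distrib,
    Finset.sum_ite_eq' (Finset.range (i+1)) i, Finset.sum_ite_eq' (Finset.range (i+1)) (i-1),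
    if_pos (Finset.mem_range.mpr (by omega)), if_pos (Finset.mem_range.mpr (by omega))]

noncomputable def step (α : ℕ → ℂ) (n : ℕ) (z : ℂ) (m : ℕ) (prev : ℕ → ℂ) : ℂ :=
  if m = 0 then 0 else if m = 1 then z
  else -(∑ j ∈ Finset.range n, α j * mu prev (n - m) j) /
    (α (n - 1) * (n - m) * z ^ (n - m - 1))

noncomputable def ctr (α : ℕ → ℂ) (n : ℕ) (z : ℂ) : ℕ → ℕ → ℂ
  | 0 => fun _ => 0
  | m + 1 => Function.update (ctr α n z m) m (step α n z m (ctr α n z m))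

noncomputable def csol (α : ℕ → ℂ) (n : ℕ) (z : ℂ) : ℕ → ℂ :=
  fun k => ctr α n z (k + 1) k

lemma ctr_ge (α : ℕ → ℂ) (n : ℕ) (z : ℂ) : ∀ m k, m ≤ k → ctr α n z m k = 0 := by
  intro m
  induction m with
  | zero => intro k _; rfl
  | succ m ih =>
    intro k hk
    show Function.update (ctr α n z m) m (step α n z m (ctr α n z m)) k = 0
    rw [Function.update_of_ne (by omega)]
    exact ih k (by omega)

lemma ctr_eq (α : ℕ → ℂ) (n : ℕ) (z : ℂ) : ∀ m k, k < m → ctr α n z m k = csol α n z k := by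
  intro m
  induction m with
  | zero => intro k hk; omega
  | succ m ih =>
    intro k hk
    by_cases hkm : k = m
    · subst hkm; rfl
    · show Function.update (ctr α n z m) m (step α n z m (ctr α n z m)) k = _
      rw [Function.update_of_ne hkm]
      exact ih k (by omega)

lemma csol_one (α : ℕ → ℂ) (n : ℕ) (z : ℂ) : csol α n z 1 = z := by
  show Function.update (ctr α n z 1) 1 (step α n z 1 (ctr α n z 1)) 1 = z
  rw [Function.update_self]
  simp [step]

lemma csol_spec (α : ℕ → ℂ) (n : ℕ) (z : ℂ) (m : ℕ) (hm : 2 ≤ m) :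
    csol α n z m = -(∑ j ∈ Finset.range n, α j * mu (ctr α n z m) (n - m) j) /
      (α (n - 1) * (n - m) * z ^ (n - m - 1)) := by
  show Function.update (ctr α n z m) m (step α n z m (ctr α n z m)) m = _
  rw [Function.update_self, step, if_neg (by omega), if_neg (by omega)]

lemma part2 (n : ℕ) (hn : 2 ≤ n) (α : ℕ → ℂ) (c : ℕ → ℂ) :
    ∑ j ∈ Finset.range n, α j * mu c 0 j = α 0 := by
  simp only [mu_zero, mul_ite, mul_one, mul_zero]
  rw [Finset.sum_ite_eq' (Finset.range n) 0 α, if_pos (Finset.mem_range.mpr (by omega))]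

/-- for any `α = (α₀,…,α_{n-1})` with `α_{n-1} ≠ 0` there exists
`g = μ(c) ∈ W(n)` (i.e. `c` with `c₁ ≠ 0`) such that `α · gᵀ = (α₀, 0, …, 0, 1)`,
where `(α · gᵀ)_i = Σ_j α_j μ_{i,j}(c)`; moreover the entry `α₀` is invariant under
this action. -/
theorem weyl_normalize_alpha (n : ℕ) (hn : 2 ≤ n) (α : ℕ → ℂ) (hα : α (n - 1) ≠ 0) :
    (∃ c : ℕ → ℂ, c 1 ≠ 0 ∧ ∀ i < n,
      ∑ j ∈ Finset.range n, α j * mu c i j =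
        if i = 0 then α 0 else if i = n - 1 then 1 else 0) ∧
    (∀ c : ℕ → ℂ, ∑ j ∈ Finset.range n, α j * mu c 0 j = α 0) := by
  refine ⟨?_, fun c => part2 n hn α c⟩
  obtain ⟨z, hz⟩ := IsAlgClosed.exists_pow_nat_eq ((α (n - 1))⁻¹) (show 0 < n - 1 by omega)
  have hz0 : z ≠ 0 := by
    intro h
    rw [h, zero_pow (by omega)] at hz
    exact hα (by simpa using hz.symm)
  set c := csol α n z with hc
  have hc1 : c 1 = z := csol_one α n z
  refine ⟨c, by rw [hc1]; exact hz0, ?_⟩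
  intro i hi
  by_cases hi0 : i = 0
  · rw [if_pos hi0, hi0]; exact part2 n hn α c
  rw [if_neg hi0]
  by_cases hitop : i = n - 1
  · rw [if_pos hitop, hitop]
    rw [Finset.sum_eq_single_of_mem (n - 1) (Finset.mem_range.mpr (by omega))]
    · rw [show mu c (n-1) (n-1) = (c 1)^(n-1) from mu_diag c (n-1), hc1, hz,
        mul_inv_cancel₀ hα]
    · intro j hj hjne
      rw [Finset.mem_range] at hj
      rw [mu_vanish c (n-1) j (by omega), mul_zero]
  · rw [if_neg hitop]
    set m := n - i with hm
    have hm2 : 2 ≤ m := by omega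
    have him : i = n - m := by omega
    set prev := ctr α n z m with hprev
    have hprev_lt : ∀ k, k < m → prev k = c k := fun k hk => ctr_eq α n z m k hk
    have hprev_ge : ∀ k, m ≤ k → prev k = 0 := fun k hk => ctr_ge α n z m k hk
    set S := ∑ j ∈ Finset.range n, α j * mu prev i j with hS
    -- the top coefficient
    have htop : mu c i (n - 1) = mu prev i (n - 1) + i * (c 1) ^ (i - 1) * c m := by
      have h1 : i + m - 1 = n - 1 := by omega
      have h2 := mu_top c m i hm2 (by omega)
      rw [h1] at h2
      rw [h2]
      congr 1
      apply mu_congr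
      intro k hk hk2
      by_cases hkm : k = m
      · rw [hkm, if_pos rfl, (hprev_ge m le_rfl).symm]
      · rw [if_neg hkm, hprev_lt k (by omega)]
    have hlow : ∀ j < n - 1, mu c i j = mu prev i j := by
      intro j hj
      apply mu_congr
      intro k hk hk2
      rw [hprev_lt k (by omega)]
    have hsplit : ∑ j ∈ Finset.range n, α j * mu c i j =
        S + α (n - 1) * (i * (c 1) ^ (i - 1) * c m) := by
      have : ∀ j ∈ Finset.range n, α j * mu c i j =
          α j * mu prev i j +
            (if j = n - 1 then α (n - 1) * (i * (c 1) ^ (i - 1) * c m) else 0) := by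
        intro j hj
        rw [Finset.mem_range] at hj
        by_cases hjtop : j = n - 1
        · rw [hjtop, if_pos rfl, htop, mul_add]
        · rw [if_neg hjtop, add_zero, hlow j (by omega)]
      rw [Finset.sum_congr rfl this, Finset.sum_add_distrib,
        Finset.sum_ite_eq' (Finset.range n) (n - 1), if_pos (Finset.mem_range.mpr (by omega))]
    rw [hsplit]
    have hcast : (n : ℂ) - (m : ℂ) = (i : ℂ) := by
      have h := Nat.cast_sub (show m ≤ n by omega) (R := ℂ)
      rw [← h, ← him]
    have hcm : c m = -S / (α (n - 1) * i * z ^ (i - 1)) := by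
      rw [hc, csol_spec α n z m hm2, ← him, ← hprev, ← hS, hcast]
    rw [hcm, hc1]
    have hinz : (i : ℂ) ≠ 0 := Nat.cast_ne_zero.mpr (by omega)
    have hzz : z ^ (i - 1) ≠ 0 := pow_ne_zero _ hz0
    field_simp
    ring
end
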